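/- Fix real numbers M and a with 0 < |a| < M, and set Δ(r) = r² − 2Mr + a², r₊ = M + √(M² − a²), r₋ = M − √(M² − a²), r*(r) = ∫_M^r (s² + a²)/Δ(s) ds for r ∈ (r₋, r₊), and κ₋ = (r₋ − r₊)/(4Mr₋). Then lim_{r → r₋⁺} r*(r) / ((1/(2κ₋)) · ln(r − r₋)) = 1. -/

import Mathlib

open MeasureTheory

noncomputable def KerrDelta (M a r : ℝ) : ℝ := r ^ 2 - 2 * M * r + a ^ 2

noncomputable def rPlus (M a : ℝ) : ℝ := M + Real.sqrt (M ^ 2 - a ^ 2)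

noncomputable def rMinus (M a : ℝ) : ℝ := M - Real.sqrt (M ^ 2 - a ^ 2)

/-- The tortoise coordinate `r*`, normalized by `r*(M) = 0`. -/
noncomputable def rStar (M a r : ℝ) : ℝ := ∫ s in M..r, (s ^ 2 + a ^ 2) / KerrDelta M a s

/-- Surface gravity of the Cauchy horizon. -/
noncomputable def kappaMinus (M a : ℝ) : ℝ := (rMinus M a - rPlus M a) / (4 * M * rMinus M a)

/-- Asymptotics of the tortoise coordinate at the Cauchy horizon:
`r*(r) / ((1/(2κ₋)) ln(r − r₋)) → 1` as `r → r₋⁺`. -/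
theorem rStar_asymptotics_cauchyHorizon (M a : ℝ) (ha : 0 < |a|) (haM : |a| < M) :
    Filter.Tendsto
      (fun r => rStar M a r / (1 / (2 * kappaMinus M a) * Real.log (r - rMinus M a)))
      (nhdsWithin (rMinus M a) (Set.Ioi (rMinus M a))) (nhds 1) := by
  have hM : 0 < M := lt_trans ha haM
  have ha2 : a ^ 2 < M ^ 2 := by nlinarith [sq_abs a, abs_nonneg a]
  set q : ℝ := Real.sqrt (M ^ 2 - a ^ 2) with hqdef
  have hq2 : q ^ 2 = M ^ 2 - a ^ 2 := Real.sq_sqrt (by linarith)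
  have hq0 : 0 < q := Real.sqrt_pos.mpr (by linarith)
  have hqM : q < M := by nlinarith [sq_abs a, abs_nonneg a]
  set rm : ℝ := M - q with hrm
  set rp : ℝ := M + q with hrp
  have hrmeq : rMinus M a = rm := rfl
  have hrpeq : rPlus M a = rp := rfl
  have hrm0 : 0 < rm := by simp only [hrm]; linarith
  have hrmM : rm < M := by simp only [hrm]; linarith
  have hMrp : M < rp := by simp only [hrp]; linarith
  set Cm : ℝ := -(M * (M - q) / q) with hCm
  set Cp : ℝ := M * (M + q) / q with hCp
  have hCmneg : Cm < 0 := by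
    rw [hCm, neg_lt_zero]
    positivity
  have hΔ : ∀ x : ℝ, KerrDelta M a x = (x - rm) * (x - rp) := by
    intro x
    simp only [KerrDelta, hrm, hrp]
    linear_combination 2 * hq2 - hq2
  set F : ℝ → ℝ := fun x => x + Cm * Real.log (x - rm) + Cp * Real.log (rp - x) with hF
  set f : ℝ → ℝ := fun s => (s ^ 2 + a ^ 2) / KerrDelta M a s with hf
  -- derivative
  have hderiv : ∀ x ∈ Set.Ioo rm rp, HasDerivAt F (f x) x := by
    intro x hx
    have hx1 : (0:ℝ) < x - rm := by linarith [hx.1]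
    have hx2 : (0:ℝ) < rp - x := by linarith [hx.2]
    have h1 : HasDerivAt (fun y : ℝ => Real.log (y - rm)) (1 / (x - rm)) x := by
      simpa using ((hasDerivAt_id x).sub_const rm).log (by simp only [id_eq]; exact hx1.ne')
    have h2 : HasDerivAt (fun y : ℝ => Real.log (rp - y)) ((-1) / (rp - x)) x := by
      simpa using ((hasDerivAt_const x rp).sub (hasDerivAt_id x)).log
        (by exact hx2.ne')
    have hFd : HasDerivAt F (1 + Cm * (1 / (x - rm)) + Cp * ((-1) / (rp - x))) x :=
      ((hasDerivAt_id x).add (h1.const_mul Cm)).add (h2.const_mul Cp)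
    convert hFd using 1
    rw [hf]
    simp only [hΔ x, hCm, hCp, hrm, hrp]
    have e1 : x - (M - q) ≠ 0 := by linarith
    have e2 : x - (M + q) ≠ 0 := by linarith
    have e3 : M + q - x ≠ 0 := by linarith
    have ha' : a ^ 2 = M ^ 2 - q ^ 2 := by linarith
    have e4 : q ≠ 0 := hq0.ne'
    rw [ha']
    field_simp
    ring
  -- explicit formula for rStar on (rm, rp)
  have hintegral : ∀ r ∈ Set.Ioo rm rp, rStar M a r = F r - F M := by
    intro r hr
    have hMIoo : M ∈ Set.Ioo rm rp := ⟨hrmM, hMrp⟩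
    have hsub : Set.uIcc M r ⊆ Set.Ioo rm rp := by
      intro x hx
      rw [Set.mem_uIcc] at hx
      constructor
      · rcases hx with h | h
        · exact lt_of_lt_of_le hrmM h.1
        · exact lt_of_lt_of_le hr.1 h.1
      · rcases hx with h | h
        · exact lt_of_le_of_lt h.2 hr.2
        · exact lt_of_le_of_lt h.2 hMrp
    have hcont : ContinuousOn f (Set.uIcc M r) := by
      apply ContinuousOn.div
      · fun_prop
      · unfold KerrDelta; fun_prop
      · intro x hx
        have hx' := hsub hx
        rw [hΔ x]
        exact mul_ne_zero (by linarith [hx'.1]) (by linarith [hx'.2])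
    exact intervalIntegral.integral_eq_sub_of_hasDerivAt
      (fun x hx => hderiv x (hsub hx)) (hcont.intervalIntegrable)
  -- the constant in the statement equals Cm
  have hCK : 1 / (2 * kappaMinus M a) = Cm := by
    rw [kappaMinus, hrmeq, hrpeq, hCm]
    simp only [hrm, hrp]
    have h1 : M - q ≠ 0 := by linarith
    have h2 : (M - q) - (M + q) ≠ 0 := by intro h; nlinarith
    field_simp
    ring
  -- the bounded part
  set G : ℝ → ℝ := fun r => r - M + Cp * Real.log (rp - r)
      - Cm * Real.log (M - rm) - Cp * Real.log (rp - M) with hG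
  have hGcont : Filter.Tendsto G (nhdsWithin rm (Set.Ioi rm)) (nhds (G rm)) := by
    apply Filter.Tendsto.mono_left _ nhdsWithin_le_nhds
    have : ContinuousAt G rm := by
      apply ContinuousAt.sub
      apply ContinuousAt.sub
      apply ContinuousAt.add
      · exact (continuous_id.sub continuous_const).continuousAt
      · have hlogc : ContinuousAt Real.log (rp - rm) :=
          Real.continuousAt_log (ne_of_gt (by simp only [hrm, hrp]; linarith))
        exact (hlogc.comp ((continuous_const.sub continuous_id).continuousAt)).const_mul Cp
      · exact continuousAt_const
      · exact continuousAt_const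
    exact this.tendsto
  -- log tends to -infty
  have hlog : Filter.Tendsto (fun r => Real.log (r - rm)) (nhdsWithin rm (Set.Ioi rm))
      Filter.atBot := by
    apply Real.tendsto_log_nhdsGT_zero.comp
    apply tendsto_nhdsWithin_of_tendsto_nhds_of_eventually_within
    · have : Filter.Tendsto (fun r : ℝ => r - rm) (nhds rm) (nhds (rm - rm)) :=
        (continuous_id.sub continuous_const).tendsto rm
      simpa using this.mono_left nhdsWithin_le_nhds
    · filter_upwards [self_mem_nhdsWithin] with r hr
      simpa [sub_pos] using hr
  have hCmlog : Filter.Tendsto (fun r => Cm * Real.log (r - rm))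
      (nhdsWithin rm (Set.Ioi rm)) Filter.atTop :=
    (Filter.tendsto_const_mul_atTop_of_neg hCmneg).mpr hlog
  have hdiv : Filter.Tendsto (fun r => G r / (Cm * Real.log (r - rm)))
      (nhdsWithin rm (Set.Ioi rm)) (nhds 0) :=
    hGcont.div_atTop hCmlog
  -- conclude
  rw [hrmeq]
  have heq : (fun r => rStar M a r / (1 / (2 * kappaMinus M a) * Real.log (r - rm)))
      =ᶠ[nhdsWithin rm (Set.Ioi rm)]
      (fun r => 1 + G r / (Cm * Real.log (r - rm))) := by
    have hIoo : Set.Ioo rm rp ∈ nhdsWithin rm (Set.Ioi rm) := by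
      apply Ioo_mem_nhdsGT_of_mem
      exact ⟨le_refl _, by linarith⟩
    filter_upwards [hIoo, hCmlog.eventually_gt_atTop 0] with r hr hpos
    rw [hCK, hintegral r hr]
    have hne : Cm * Real.log (r - rm) ≠ 0 := ne_of_gt hpos
    have hFr : F r - F M = Cm * Real.log (r - rm) + G r := by
      simp only [hF, hG]; ring
    rw [hFr]
    rw [add_div, div_self hne]
  apply Filter.Tendsto.congr' heq.symm
  have := (tendsto_const_nhds (x := (1:ℝ)) (f := nhdsWithin rm (Set.Ioi rm))).add hdiv
  simpa using this
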